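/- Assume W = V, V reflexive, j : V → H injective with dense range, and let a₁ be a bounded sesquilinear form on V × V with inf-sup constant c > 0, nondegenerate in the second component, with Lax–Milgram isomorphism T : V → V*. Let j* : H* → V* be ψ ↦ ψ∘j. Then for u ∈ V and φ ∈ H*: a₁(u,v) = φ(jv) for all v ∈ V if and only if Tu = j*φ. Consequently the operator A₁ := {(ju, φ) ∈ H × H* : u ∈ V, a₁(u,v) = φ(jv) for all v ∈ V} is a bijection from its domain onto H* with bounded inverse φ ↦ j(T⁻¹(j*φ)) ∈ L(H*, H), it is a closed operator from H to H*, and its domain {ju : u ∈ V, Tu ∈ ran(j*)} is dense in H. -/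

import Mathlib

lemma aux_dense_of_dual {𝕂 E : Type*} [RCLike 𝕂] [NormedAddCommGroup E] [NormedSpace 𝕂 E]
    (p : Submodule 𝕂 E)
    (h : ∀ f : E →L[𝕂] 𝕂, (∀ x ∈ p, f x = 0) → f = 0) :
    Dense (p : Set E) := by
  by_contra hd
  set q := p.topologicalClosure with hq
  have hqc : IsClosed (q : Set E) := p.isClosed_topologicalClosure
  have hx : ∃ x : E, x ∉ q := by
    by_contra hx
    push_neg at hx
    apply hd
    have huniv : (q : Set E) = Set.univ := Set.eq_univ_of_forall hx
    have h2 : closure (p : Set E) = (q : Set E) := rfl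
    rw [dense_iff_closure_eq, h2, huniv]
  obtain ⟨x, hxq⟩ := hx
  haveI : IsClosed (q : Set E) := hqc
  have hne : Submodule.Quotient.mk (p := q) x ≠ 0 := by
    simpa [Submodule.Quotient.mk_eq_zero] using hxq
  obtain ⟨g, hg1, hg2⟩ := exists_dual_vector 𝕂 _ (norm_ne_zero_iff.2 hne)
  have hmkcont : Continuous (fun y : E => Submodule.Quotient.mk (p := q) y) :=
    continuous_quot_mk
  let π : E →L[𝕂] (E ⧸ q) := ⟨q.mkQ, hmkcont⟩
  have hf : g.comp π = 0 := by
    apply h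
    intro y hy
    have hyq : y ∈ q := Submodule.le_topologicalClosure p hy
    simp only [ContinuousLinearMap.comp_apply]
    have hz : π y = 0 := (Submodule.Quotient.mk_eq_zero q).2 hyq
    rw [hz, map_zero]
  have hz : g (π x) = 0 := by
    have := congrArg (fun F => F x) hf
    simpa using this
  rw [show π x = Submodule.Quotient.mk x from rfl, hg2] at hz
  exact hne (by simpa [norm_eq_zero] using hz)

noncomputable def auxPrecomp {𝕂 V H : Type*} [RCLike 𝕂]
    [NormedAddCommGroup V] [NormedSpace 𝕂 V]
    [NormedAddCommGroup H] [NormedSpace 𝕂 H] (j : V →L[𝕂] H) :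
    (H →SL[starRingEnd 𝕂] 𝕂) →L[𝕂] (V →SL[starRingEnd 𝕂] 𝕂) :=
  LinearMap.mkContinuous
    { toFun := fun φ => φ.comp j
      map_add' := fun φ₁ φ₂ => by ext v; simp
      map_smul' := fun c φ => by ext v; simp }
    ‖j‖ (fun φ => by
      simpa [mul_comm] using ContinuousLinearMap.opNorm_comp_le φ j)

@[simp] lemma auxPrecomp_apply {𝕂 V H : Type*} [RCLike 𝕂]
    [NormedAddCommGroup V] [NormedSpace 𝕂 V]
    [NormedAddCommGroup H] [NormedSpace 𝕂 H] (j : V →L[𝕂] H)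
    (φ : H →SL[starRingEnd 𝕂] 𝕂) :
    auxPrecomp j φ = φ.comp j := rfl

noncomputable def auxConjV {𝕂 V : Type*} [RCLike 𝕂]
    [NormedAddCommGroup V] [NormedSpace 𝕂 V] :
    (V →L[𝕂] 𝕂) →SL[starRingEnd 𝕂] (V →SL[starRingEnd 𝕂] 𝕂) :=
  ContinuousLinearMap.compSL V 𝕂 𝕂 (RingHom.id 𝕂) (starRingEnd 𝕂)
    ((starL 𝕂 : 𝕂 ≃L⋆[𝕂] 𝕂) : 𝕂 →SL[starRingEnd 𝕂] 𝕂)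

@[simp] lemma auxConjV_apply {𝕂 V : Type*} [RCLike 𝕂]
    [NormedAddCommGroup V] [NormedSpace 𝕂 V] (g : V →L[𝕂] 𝕂) (v : V) :
    (auxConjV g) v = star (g v) := rfl

/-- Theorem 3.8 c): with `W = V` reflexive and `j : V → H` injective with dense range,
`A₁ = (j*)⁻¹ ∘ T` holds, i.e. `a₁(u,v) = φ(jv)` for all `v` iff `Tu = j*φ`;
the operator `A₁ = {(ju,φ) : a₁(u,v) = φ(jv) ∀v}` is a bijection onto `H*` with bounded
inverse `φ ↦ j(T⁻¹(j*φ))`, it is closed, and it is densely defined. -/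
theorem operator_A1_properties
    {𝕂 V H : Type*} [RCLike 𝕂]
    [NormedAddCommGroup V] [NormedSpace 𝕂 V] [CompleteSpace V] [Nontrivial V]
    [NormedAddCommGroup H] [NormedSpace 𝕂 H] [CompleteSpace H]
    (hrefl : Function.Surjective ⇑(NormedSpace.inclusionInDoubleDual 𝕂 V))
    (j : V →L[𝕂] H) (hj : Function.Injective ⇑j) (hjdense : DenseRange ⇑j)
    (a₁ : V →L[𝕂] (V →SL[starRingEnd 𝕂] 𝕂))
    (c : ℝ) (hc : 0 < c)
    (hinfsup : ∀ v : V, c * ‖v‖ ≤ ‖a₁ v‖)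
    (hnondeg : ∀ w : V, (∀ v : V, a₁ v w = 0) → w = 0)
    (T : V ≃L[𝕂] (V →SL[starRingEnd 𝕂] 𝕂))
    (hT : ∀ v w : V, a₁ v w = T v w) :
    (∀ (u : V) (φ : H →SL[starRingEnd 𝕂] 𝕂),
        (∀ v : V, a₁ u v = φ (j v)) ↔ (T u : V →SL[starRingEnd 𝕂] 𝕂) = φ.comp j) ∧
    (∀ p ∈ {p : H × (H →SL[starRingEnd 𝕂] 𝕂) |
              ∃ u : V, p.1 = j u ∧ ∀ v : V, a₁ u v = p.2 (j v)},
        p.1 = j (T.symm (p.2.comp j))) ∧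
    (∀ φ : H →SL[starRingEnd 𝕂] 𝕂,
        (j (T.symm (φ.comp j)), φ) ∈ {p : H × (H →SL[starRingEnd 𝕂] 𝕂) |
              ∃ u : V, p.1 = j u ∧ ∀ v : V, a₁ u v = p.2 (j v)}) ∧
    (∃ B : (H →SL[starRingEnd 𝕂] 𝕂) →L[𝕂] H,
        ∀ φ : H →SL[starRingEnd 𝕂] 𝕂, B φ = j (T.symm (φ.comp j))) ∧
    IsClosed {p : H × (H →SL[starRingEnd 𝕂] 𝕂) |
              ∃ u : V, p.1 = j u ∧ ∀ v : V, a₁ u v = p.2 (j v)} ∧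
    Dense (Prod.fst '' {p : H × (H →SL[starRingEnd 𝕂] 𝕂) |
              ∃ u : V, p.1 = j u ∧ ∀ v : V, a₁ u v = p.2 (j v)}) := by
  have hiff : ∀ (u : V) (φ : H →SL[starRingEnd 𝕂] 𝕂),
      (∀ v : V, a₁ u v = φ (j v)) ↔ (T u : V →SL[starRingEnd 𝕂] 𝕂) = φ.comp j := by
    intro u φ
    constructor
    · intro h
      ext v
      rw [← hT u v, h v]
      rfl
    · intro h v
      rw [hT u v, h]
      rfl
  have hmem : ∀ φ : H →SL[starRingEnd 𝕂] 𝕂,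
      (j (T.symm (φ.comp j)), φ) ∈ {p : H × (H →SL[starRingEnd 𝕂] 𝕂) |
              ∃ u : V, p.1 = j u ∧ ∀ v : V, a₁ u v = p.2 (j v)} := by
    intro φ
    refine ⟨T.symm (φ.comp j), rfl, fun v => ?_⟩
    rw [hT]
    simp
  have huniq : ∀ p ∈ {p : H × (H →SL[starRingEnd 𝕂] 𝕂) |
              ∃ u : V, p.1 = j u ∧ ∀ v : V, a₁ u v = p.2 (j v)},
      p.1 = j (T.symm (p.2.comp j)) := by
    rintro ⟨x, φ⟩ ⟨u, hx, hu⟩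
    have h := (hiff u φ).1 hu
    simp only at hx ⊢
    rw [hx, ← h, T.symm_apply_apply]
  set B : (H →SL[starRingEnd 𝕂] 𝕂) →L[𝕂] H :=
    (j.comp (T.symm : (V →SL[starRingEnd 𝕂] 𝕂) →L[𝕂] V)).comp (auxPrecomp j) with hBdef
  have hB : ∀ φ : H →SL[starRingEnd 𝕂] 𝕂, B φ = j (T.symm (φ.comp j)) := fun φ => rfl
  refine ⟨hiff, huniq, hmem, ⟨B, hB⟩, ?_, ?_⟩
  · have hSeq : {p : H × (H →SL[starRingEnd 𝕂] 𝕂) |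
              ∃ u : V, p.1 = j u ∧ ∀ v : V, a₁ u v = p.2 (j v)} =
        {p : H × (H →SL[starRingEnd 𝕂] 𝕂) | p.1 = B p.2} := by
      ext p
      constructor
      · intro hp
        exact (huniq p hp).trans (hB p.2).symm
      · intro hp
        have := hmem p.2
        have hp1 : p = (j (T.symm (p.2.comp j)), p.2) := by
          rw [Prod.ext_iff]
          exact ⟨hp.trans (hB p.2), rfl⟩
        rw [hp1]
        exact this
    rw [hSeq]
    exact isClosed_eq continuous_fst (B.continuous.comp continuous_snd)
  · have hSet : Prod.fst '' {p : H × (H →SL[starRingEnd 𝕂] 𝕂) |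
              ∃ u : V, p.1 = j u ∧ ∀ v : V, a₁ u v = p.2 (j v)} =
        (LinearMap.range (B : (H →SL[starRingEnd 𝕂] 𝕂) →ₗ[𝕂] H) : Set H) := by
      ext x
      constructor
      · rintro ⟨p, hp, rfl⟩
        exact ⟨p.2, ((huniq p hp).trans (hB p.2).symm).symm⟩
      · rintro ⟨φ, rfl⟩
        exact ⟨(j (T.symm (φ.comp j)), φ), hmem φ, (hB φ).symm⟩
    rw [hSet]
    apply aux_dense_of_dual
    intro f hf
    have hf' : ∀ φ : H →SL[starRingEnd 𝕂] 𝕂, f (B φ) = 0 := fun φ => hf _ ⟨φ, rfl⟩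
    -- the double dual element G
    set G : (V →L[𝕂] 𝕂) →L[𝕂] 𝕂 :=
      ((starL 𝕂 : 𝕂 ≃L⋆[𝕂] 𝕂) : 𝕂 →SL[starRingEnd 𝕂] 𝕂).comp
        ((f.comp (j.comp (T.symm : (V →SL[starRingEnd 𝕂] 𝕂) →L[𝕂] V))).comp
          (auxConjV (𝕂 := 𝕂) (V := V))) with hGdef
    have hGapp : ∀ g : V →L[𝕂] 𝕂, G g = star (f (j (T.symm (auxConjV g)))) := fun g => rfl
    obtain ⟨v₀, hv₀⟩ := hrefl G
    have hv₀' : ∀ g : V →L[𝕂] 𝕂, g v₀ = G g := by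
      intro g
      rw [← hv₀]
      rfl
    have hjv₀ : ∀ ψ : H →L[𝕂] 𝕂, ψ (j v₀) = 0 := by
      intro ψ
      have key : auxConjV (ψ.comp j) =
          (((starL 𝕂 : 𝕂 ≃L⋆[𝕂] 𝕂) : 𝕂 →SL[starRingEnd 𝕂] 𝕂).comp ψ).comp j := by
        ext v; rfl
      have : G (ψ.comp j) = star (f (B
          (((starL 𝕂 : 𝕂 ≃L⋆[𝕂] 𝕂) : 𝕂 →SL[starRingEnd 𝕂] 𝕂).comp ψ))) := by
        rw [hGapp, key, hB]
      rw [hf'] at this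
      have h2 := hv₀' (ψ.comp j)
      rw [this, star_zero] at h2
      exact h2
    have hjv₀0 : j v₀ = 0 :=
      NormedSpace.eq_zero_of_forall_dual_eq_zero 𝕂 hjv₀
    have hv₀0 : v₀ = 0 := hj (hjv₀0.trans (map_zero j).symm)
    have hG0 : ∀ g : V →L[𝕂] 𝕂, G g = 0 := by
      intro g
      rw [← hv₀' g, hv₀0, map_zero]
    have hfj : ∀ ξ : V →SL[starRingEnd 𝕂] 𝕂, f (j (T.symm ξ)) = 0 := by
      intro ξ
      have key : auxConjV (((starL 𝕂 : 𝕂 ≃L⋆[𝕂] 𝕂) : 𝕂 →SL[starRingEnd 𝕂] 𝕂).comp ξ) = ξ := by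
        ext v
        simp [auxConjV_apply, star_star]
      have h2 := hG0 (((starL 𝕂 : 𝕂 ≃L⋆[𝕂] 𝕂) : 𝕂 →SL[starRingEnd 𝕂] 𝕂).comp ξ)
      rw [hGapp, key] at h2
      exact star_eq_zero.1 h2
    have hfv : ∀ v : V, f (j v) = 0 := by
      intro v
      have := hfj (T v)
      rwa [T.symm_apply_apply] at this
    have hfz : ⇑f = fun _ : H => (0 : 𝕂) :=
      hjdense.equalizer f.continuous continuous_const (funext fun v => hfv v)
    ext x
    exact congrFun hfz x
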